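/- The candidate value function J(x,y,z,t) = (x^{α_m}/α_m)(y^{α_g}/α_g)(z^{α_b}/α_b) · exp(b(T−t)), with b = (1/2)λ₁²σ₁² α_m/(1−α_m) + (1/2)λ_g²σ₂² α_g/(1−α_g) + (1/2)λ_b²σ₃² α_b/(1−α_b) + (θ_m α_m + θ_g α_g + θ_b α_b) r, satisfies the PDE J_t − (1/2)λ₁²σ₁² J_x²/J_{xx} − (1/2)λ_g²σ₂² J_y²/J_{yy} − (1/2)λ_b²σ₃² J_z²/J_{zz} + J_x x θ_m r + J_y y θ_g r + J_z z θ_b r = 0 for all x,y,z > 0 and t ≤ T. -/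

import Mathlib

lemma deriv1 (α C x : ℝ) (hα : α ≠ 0) (hx : 0 < x) :
    deriv (fun x' : ℝ => (x' ^ α / α) * C) x = x ^ (α - 1) * C := by
  have h : HasDerivAt (fun x' : ℝ => (x' ^ α / α) * C)
      ((α * x ^ (α - 1)) / α * C) x :=
    ((Real.hasDerivAt_rpow_const (Or.inl hx.ne')).div_const α).mul_const C
  rw [h.deriv]; field_simp

lemma deriv2 (α C x : ℝ) (hα : α ≠ 0) (hx : 0 < x) :
    deriv (fun x' : ℝ => deriv (fun x'' : ℝ => (x'' ^ α / α) * C) x') x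
      = (α - 1) * x ^ (α - 2) * C := by
  have hev : (fun x' : ℝ => deriv (fun x'' : ℝ => (x'' ^ α / α) * C) x')
      =ᶠ[nhds x] fun x' => x' ^ (α - 1) * C := by
    filter_upwards [IsOpen.mem_nhds isOpen_Ioi hx] with u hu
    exact deriv1 α C u hα hu
  rw [hev.deriv_eq]
  have h : HasDerivAt (fun x' : ℝ => x' ^ (α - 1) * C)
      ((α - 1) * x ^ (α - 1 - 1) * C) x :=
    (Real.hasDerivAt_rpow_const (Or.inl hx.ne')).mul_const C
  have he : α - 1 - 1 = α - 2 := by ring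
  rw [h.deriv, he]

lemma quot (α C x : ℝ) (hα1 : α - 1 ≠ 0) (hC : C ≠ 0) (hx : 0 < x) :
    (x ^ (α - 1) * C) ^ 2 / ((α - 1) * x ^ (α - 2) * C)
      = x ^ α * C / (α - 1) := by
  have hsq : (x ^ (α - 1)) ^ 2 = x ^ α * x ^ (α - 2) := by
    rw [sq, ← Real.rpow_add hx, ← Real.rpow_add hx]; ring_nf
  have hx2 : x ^ (α - 2) ≠ 0 := (Real.rpow_pos_of_pos hx _).ne'
  rw [mul_pow, hsq]
  field_simp

set_option maxHeartbeats 2000000 in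
/-- The candidate value function
`J(x,y,z,t) = (x^αm/αm)(y^αg/αg)(z^αb/αb) exp(b(T-t))` satisfies the reduced
HJB PDE for all `x,y,z > 0` and `t ≤ T`. -/
theorem value_function_solves_PDE
    (αm αg αb lam1 lamg lamb σ1 σ2 σ3 θm θg θb r T : ℝ)
    (ham : αm < 0) (hag : αg < 0) (hab : αb < 0)
    (b : ℝ)
    (hbdef : b = (1/2) * lam1^2 * σ1^2 * (αm / (1 - αm))
      + (1/2) * lamg^2 * σ2^2 * (αg / (1 - αg))
      + (1/2) * lamb^2 * σ3^2 * (αb / (1 - αb))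
      + (θm * αm + θg * αg + θb * αb) * r)
    (J : ℝ → ℝ → ℝ → ℝ → ℝ)
    (hJ : J = fun x y z t =>
      (x ^ αm / αm) * (y ^ αg / αg) * (z ^ αb / αb) * Real.exp (b * (T - t))) :
    ∀ x y z t : ℝ, 0 < x → 0 < y → 0 < z → t ≤ T →
      deriv (fun s => J x y z s) t
        - (1/2) * lam1^2 * σ1^2 *
            (deriv (fun x' => J x' y z t) x) ^ 2
            / (deriv (fun x' => deriv (fun x'' => J x'' y z t) x') x)
        - (1/2) * lamg^2 * σ2^2 *
            (deriv (fun y' => J x y' z t) y) ^ 2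
            / (deriv (fun y' => deriv (fun y'' => J x y'' z t) y') y)
        - (1/2) * lamb^2 * σ3^2 *
            (deriv (fun z' => J x y z' t) z) ^ 2
            / (deriv (fun z' => deriv (fun z'' => J x y z'' t) z') z)
        + (deriv (fun x' => J x' y z t) x) * x * θm * r
        + (deriv (fun y' => J x y' z t) y) * y * θg * r
        + (deriv (fun z' => J x y z' t) z) * z * θb * r = 0 := by
  intro x y z t hx hy hz _
  subst hJ
  have hm : αm ≠ 0 := ham.ne
  have hg : αg ≠ 0 := hag.ne
  have hb0 : αb ≠ 0 := hab.ne
  have hm1 : αm - 1 ≠ 0 := by linarith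
  have hg1 : αg - 1 ≠ 0 := by linarith
  have hb1 : αb - 1 ≠ 0 := by linarith
  have hm1' : 1 - αm ≠ 0 := by linarith
  have hg1' : 1 - αg ≠ 0 := by linarith
  have hb1' : 1 - αb ≠ 0 := by linarith
  set E := Real.exp (b * (T - t)) with hE
  have hEpos : 0 < E := Real.exp_pos _
  set A := x ^ αm with hA
  set B := y ^ αg with hB
  set Cc := z ^ αb with hC
  have hApos : 0 < A := Real.rpow_pos_of_pos hx _
  have hBpos : 0 < B := Real.rpow_pos_of_pos hy _
  have hCpos : 0 < Cc := Real.rpow_pos_of_pos hz _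
  -- constants
  have hCx : (B / αg) * (Cc / αb) * E ≠ 0 :=
    mul_ne_zero (mul_ne_zero (div_ne_zero hBpos.ne' hg) (div_ne_zero hCpos.ne' hb0)) hEpos.ne'
  have hCy : (A / αm) * (Cc / αb) * E ≠ 0 :=
    mul_ne_zero (mul_ne_zero (div_ne_zero hApos.ne' hm) (div_ne_zero hCpos.ne' hb0)) hEpos.ne'
  have hCz : (A / αm) * (B / αg) * E ≠ 0 :=
    mul_ne_zero (mul_ne_zero (div_ne_zero hApos.ne' hm) (div_ne_zero hBpos.ne' hg)) hEpos.ne'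
  -- time derivative
  have ht : deriv (fun s => (x ^ αm / αm) * (y ^ αg / αg) * (z ^ αb / αb)
      * Real.exp (b * (T - s))) t
      = (A / αm) * (B / αg) * (Cc / αb) * (E * (-b)) := by
    have hlin : HasDerivAt (fun s : ℝ => b * (T - s)) (-b) t := by
      simpa using ((hasDerivAt_const t T).sub (hasDerivAt_id t)).const_mul b
    have h : HasDerivAt (fun s => (x ^ αm / αm) * (y ^ αg / αg) * (z ^ αb / αb)
        * Real.exp (b * (T - s)))
        ((x ^ αm / αm) * (y ^ αg / αg) * (z ^ αb / αb) * (Real.exp (b * (T - t)) * (-b))) t :=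
      (hlin.exp).const_mul _
    rw [h.deriv]
  -- first derivatives
  have hfx : (fun x' : ℝ => (x' ^ αm / αm) * (y ^ αg / αg) * (z ^ αb / αb)
      * Real.exp (b * (T - t)))
      = fun x' : ℝ => (x' ^ αm / αm) * ((B / αg) * (Cc / αb) * E) := by
    funext u; rw [hB, hC, hE]; ring
  have hfy : (fun y' : ℝ => (x ^ αm / αm) * (y' ^ αg / αg) * (z ^ αb / αb)
      * Real.exp (b * (T - t)))
      = fun y' : ℝ => (y' ^ αg / αg) * ((A / αm) * (Cc / αb) * E) := by
    funext u; rw [hA, hC, hE]; ring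
  have hfz : (fun z' : ℝ => (x ^ αm / αm) * (y ^ αg / αg) * (z' ^ αb / αb)
      * Real.exp (b * (T - t)))
      = fun z' : ℝ => (z' ^ αb / αb) * ((A / αm) * (B / αg) * E) := by
    funext u; rw [hA, hB, hE]; ring
  simp only [hfx, hfy, hfz, ht,
    deriv1 αm ((B / αg) * (Cc / αb) * E) x hm hx,
    deriv1 αg ((A / αm) * (Cc / αb) * E) y hg hy,
    deriv1 αb ((A / αm) * (B / αg) * E) z hb0 hz,
    deriv2 αm ((B / αg) * (Cc / αb) * E) x hm hx,
    deriv2 αg ((A / αm) * (Cc / αb) * E) y hg hy,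
    deriv2 αb ((A / αm) * (B / αg) * E) z hb0 hz]
  simp only [mul_div_assoc]
  simp only [quot αm ((B / αg) * (Cc / αb) * E) x hm1 hCx hx,
    quot αg ((A / αm) * (Cc / αb) * E) y hg1 hCy hy,
    quot αb ((A / αm) * (B / αg) * E) z hb1 hCz hz]
  have hxm : x ^ (αm - 1) * x = A := by
    rw [hA, ← Real.rpow_add_one hx.ne']; ring_nf
  have hyg : y ^ (αg - 1) * y = B := by
    rw [hB, ← Real.rpow_add_one hy.ne']; ring_nf
  have hzb : z ^ (αb - 1) * z = Cc := by
    rw [hC, ← Real.rpow_add_one hz.ne']; ring_nf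
  have hx' : x ^ (αm - 1) = A / x := by rw [eq_div_iff hx.ne']; exact hxm
  have hy' : y ^ (αg - 1) = B / y := by rw [eq_div_iff hy.ne']; exact hyg
  have hz' : z ^ (αb - 1) = Cc / z := by rw [eq_div_iff hz.ne']; exact hzb
  rw [hx', hy', hz', hbdef]
  field_simp
  ring
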